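/- Let K be a field and s, t nonzero elements. If (x,y,t) evolves by the q-Painlevé I map x̄ = t/(x - s⁻¹y), ȳ = sx/y, t̄ = st, then eliminating x yields the second-order scalar equation ȳ·y_·y(y - 1) = st, where y_ denotes the previous value of y; i.e., if (x̄,ȳ) = φ(x,y) and (x,y) = φ(x_,y_) with all quantities defined and nonzero, then ȳ·y_ = st/(y(y - 1)). -/

import Mathlib

/-- Eliminating x from the q-Painlevé I map yields the scalar
equation ȳ·yₚ = st/(y(y-1)): if y = s·xₚ/yₚ and x = tₚ/(xₚ - yₚ/s) come from the
previous step (xₚ, yₚ, tₚ denoting previous values), t = s·tₚ, and ȳ = s·x/y,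
then ȳ·yₚ = s·t/(y·(y-1)). -/
theorem qP1_scalar_form {K : Type*} [Field K]
    (s tp t xp yp x y : K)
    (hs : s ≠ 0) (htp : tp ≠ 0) (hxp : xp ≠ 0) (hyp' : yp ≠ 0)
    (hx0 : x ≠ 0) (hy0 : y ≠ 0) (hy1 : y ≠ 1)
    (hden : xp - yp / s ≠ 0)
    (hy : y = s * xp / yp) (hx : x = tp / (xp - yp / s)) (ht : t = s * tp) :
    (s * x / y) * yp = s * t / (y * (y - 1)) := by
  have hy1' : y - 1 ≠ 0 := sub_ne_zero.mpr hy1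
  subst hx hy ht
  field_simp at *
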